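/- Let n ≥ 1, let d₁, …, dₙ > 0, D = diag(d₁, …, dₙ), and d := min{d₁, …, dₙ}. Let L > 0 and 0 < x* ≤ L, let V : ℝ → Mₙ(ℝ) be continuous on [0, L] with K = sup_{x ∈ [0, L]} ‖V(x)‖, and let Θ ∈ Mₙ(ℝ) with C = ‖Θ‖. Suppose λ ∈ ℂ and v : ℝ → ℂⁿ is twice continuously differentiable on [0, x*], not identically zero there, and satisfies D v″(x) + V(x) v(x) = λ v(x) for all x ∈ [0, x*] together with the Robin boundary condition D v′(0) = Θ v(0) and the Dirichlet condition v(x*) = 0. Then Re λ ≤ K + C²/d. -/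

import Mathlib

set_option synthInstance.maxHeartbeats 1000000
set_option maxHeartbeats 1000000

open scoped InnerProductSpace
open intervalIntegral MeasureTheory


/-- A real `n × n` matrix acting on `ℂⁿ` (with its standard Hermitian inner product)
componentwise, as a continuous linear map; its norm is the operator norm. -/
noncomputable def matCLM {n : ℕ} (M : Matrix (Fin n) (Fin n) ℝ) :
    EuclideanSpace ℂ (Fin n) →L[ℂ] EuclideanSpace ℂ (Fin n) :=
  Matrix.toEuclideanCLM (𝕜 := ℂ) (M.map Complex.ofReal)

lemma matCLM_apply {n : ℕ} (M : Matrix (Fin n) (Fin n) ℝ) (x : EuclideanSpace ℂ (Fin n))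
    (i : Fin n) : matCLM M x i = ∑ j, (M i j : ℂ) * x j := rfl

lemma diag_quad {n : ℕ} (d : Fin n → ℝ) (w : EuclideanSpace ℂ (Fin n)) :
    (⟪w, matCLM (Matrix.diagonal d) w⟫_ℂ).re = ∑ i, d i * ‖w i‖ ^ 2 := by
  rw [PiLp.inner_apply, Complex.re_sum]
  congr 1; ext i
  have h1 : matCLM (Matrix.diagonal d) w i = (d i : ℂ) * w i := by
    rw [matCLM_apply, Finset.sum_eq_single i]
    · simp
    · intro j _ hj; simp [Matrix.diagonal_apply_ne' _ hj]
    · simp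
  have h2 : (d i : ℂ) * w i * (starRingEnd ℂ) (w i)
      = (d i : ℂ) * (w i * (starRingEnd ℂ) (w i)) := by ring
  rw [RCLike.inner_apply, h1, h2, Complex.mul_conj']
  simp [Complex.normSq_eq_norm_sq, ← Complex.ofReal_pow]

lemma euclidean_norm_sq {n : ℕ} (w : EuclideanSpace ℂ (Fin n)) :
    ‖w‖ ^ 2 = ∑ i, ‖w i‖ ^ 2 := by
  rw [EuclideanSpace.norm_eq, Real.sq_sqrt]
  positivity

lemma diag_lower {n : ℕ} (d : Fin n → ℝ) (dmin : ℝ) (hdm : ∀ i, dmin ≤ d i)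
    (w : EuclideanSpace ℂ (Fin n)) :
    dmin * ‖w‖ ^ 2 ≤ (⟪w, matCLM (Matrix.diagonal d) w⟫_ℂ).re := by
  rw [diag_quad, euclidean_norm_sq, Finset.mul_sum]
  exact Finset.sum_le_sum fun i _ =>
    mul_le_mul_of_nonneg_right (hdm i) (by positivity)

/-- `matCLM` as an `ℝ`-linear map, to get continuity. -/
noncomputable def matLM (n : ℕ) : Matrix (Fin n) (Fin n) ℝ →ₗ[ℝ]
    (EuclideanSpace ℂ (Fin n) →L[ℂ] EuclideanSpace ℂ (Fin n)) where
  toFun := matCLM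
  map_add' M N := by
    unfold matCLM
    rw [← map_add]
    congr 1
    ext i j
    simp [Matrix.map_apply]
  map_smul' r M := by
    unfold matCLM
    simp only [RingHom.id_apply]
    have h : (r • M).map Complex.ofReal = (r : ℂ) • M.map Complex.ofReal := by
      ext i j; simp [Matrix.map_apply, Complex.real_smul]
    rw [h, _root_.map_smul]
    ext x i
    simp [Complex.real_smul]

lemma matCLM_continuous (n : ℕ) :
    Continuous (matCLM (n := n)) :=
  (matLM n).continuous_of_finiteDimensional

/-- Let `d₁, …, dₙ > 0`, `D = diag (d₁, …, dₙ)`, `dmin = min {d₁, …, dₙ}`,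
`0 < x* ≤ L`, `V : ℝ → Mₙ(ℝ)` continuous on `[0, L]` with `K = sup_{x ∈ [0,L]} ‖V x‖`, and
`Θ ∈ Mₙ(ℝ)` with `C = ‖Θ‖`. If `λ ∈ ℂ` and `v : ℝ → ℂⁿ` is twice continuously differentiable
on `[0, x*]`, not identically zero there, satisfies `D v″ + V v = λ v` on `[0, x*]`, the Robin
condition `D v′(0) = Θ v(0)` and the Dirichlet condition `v x* = 0`, then
`Re λ ≤ K + C²/dmin`. -/
theorem stmt9 (n : ℕ) (hn : 1 ≤ n) (d : Fin n → ℝ) (hd : ∀ i, 0 < d i)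
    (dmin : ℝ) (hdmin : IsLeast (Set.range d) dmin)
    (L xstar : ℝ) (hL : 0 < L) (hxstar : 0 < xstar) (hxL : xstar ≤ L)
    (V : ℝ → Matrix (Fin n) (Fin n) ℝ) (hV : ContinuousOn V (Set.Icc 0 L))
    (K : ℝ) (hK : K = ⨆ x : Set.Icc (0 : ℝ) L, ‖matCLM (V x)‖)
    (Θ : Matrix (Fin n) (Fin n) ℝ) (C : ℝ) (hC : C = ‖matCLM Θ‖)
    (lam : ℂ) (v : ℝ → EuclideanSpace ℂ (Fin n))
    (hreg : ContDiffOn ℝ 2 v (Set.Icc 0 xstar))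
    (hne : ∃ x ∈ Set.Icc (0 : ℝ) xstar, v x ≠ 0)
    (heq : ∀ x ∈ Set.Icc (0 : ℝ) xstar,
      matCLM (Matrix.diagonal d)
          (derivWithin (derivWithin v (Set.Icc 0 xstar)) (Set.Icc 0 xstar) x) +
        matCLM (V x) (v x) = lam • v x)
    (hRobin : matCLM (Matrix.diagonal d) (derivWithin v (Set.Icc 0 xstar) 0) =
      matCLM Θ (v 0))
    (hDir : v xstar = 0) :
    lam.re ≤ K + C ^ 2 / dmin := by
  obtain ⟨i₀, hi₀⟩ := hdmin.1
  have hdminpos : 0 < dmin := hi₀ ▸ hd i₀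
  have hdmin_le : ∀ i, dmin ≤ d i := fun i => hdmin.2 ⟨i, rfl⟩
  have hC0 : 0 ≤ C := hC ▸ norm_nonneg _
  set S := Set.Icc (0:ℝ) xstar with hSdef
  have hUD : UniqueDiffOn ℝ S := uniqueDiffOn_Icc hxstar
  set v₁ := derivWithin v S with hv₁def
  set v₂ := derivWithin v₁ S with hv₂def
  have hv_cont : ContinuousOn v S := hreg.continuousOn
  have hv_diff : DifferentiableOn ℝ v S := hreg.differentiableOn (by norm_num)
  have hv1_cd : ContDiffOn ℝ 1 v₁ S := hreg.derivWithin (m := 1) hUD (by norm_num)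
  have hv1_cont : ContinuousOn v₁ S := hv1_cd.continuousOn
  have hv1_diff : DifferentiableOn ℝ v₁ S := hv1_cd.differentiableOn (by norm_num)
  have hv2_cont : ContinuousOn v₂ S := (hv1_cd.derivWithin (m := 0) hUD (by norm_num)).continuousOn
  have huIcc : Set.uIcc (0:ℝ) xstar = S := Set.uIcc_of_le hxstar.le
  have hdv : ∀ x ∈ Set.Ioo (0:ℝ) xstar, HasDerivAt v (v₁ x) x := fun x hx =>
    ((hv_diff x (Set.Ioo_subset_Icc_self hx)).hasDerivWithinAt).hasDerivAt
      (Icc_mem_nhds hx.1 hx.2)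
  have hdv1 : ∀ x ∈ Set.Ioo (0:ℝ) xstar, HasDerivAt v₁ (v₂ x) x := fun x hx =>
    ((hv1_diff x (Set.Ioo_subset_Icc_self hx)).hasDerivWithinAt).hasDerivAt
      (Icc_mem_nhds hx.1 hx.2)
  set Dm := matCLM (Matrix.diagonal d) with hDmdef
  -- real-valued integrands
  set p : ℝ → ℝ := fun x => ‖v x‖ ^ 2 with hpdef
  set q : ℝ → ℝ := fun x => ‖v₁ x‖ ^ 2 with hqdef
  set a : ℝ → ℝ := fun x => (⟪v₁ x, Dm (v₁ x)⟫_ℂ).re with hadef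
  set b : ℝ → ℝ := fun x => (⟪v x, matCLM (V x) (v x)⟫_ℂ).re with hbdef
  have hScont : ∀ {f : ℝ → ℝ}, ContinuousOn f S → IntervalIntegrable f volume 0 xstar :=
    fun hf => (huIcc ▸ hf).intervalIntegrable
  have hp_cont : ContinuousOn p S := (hv_cont.norm).pow 2
  have hq_cont : ContinuousOn q S := (hv1_cont.norm).pow 2
  have ha_cont : ContinuousOn a S :=
    Complex.continuous_re.comp_continuousOn
      (hv1_cont.inner (Dm.continuous.comp_continuousOn hv1_cont))
  have hVS : ContinuousOn (fun x => matCLM (V x)) S :=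
    ((matCLM_continuous n).comp_continuousOn (hV.mono (Set.Icc_subset_Icc le_rfl hxL)))
  have hb_cont : ContinuousOn b S :=
    Complex.continuous_re.comp_continuousOn (hv_cont.inner (hVS.clm_apply hv_cont))
  have hpint := hScont hp_cont
  have hqint := hScont hq_cont
  have haint := hScont ha_cont
  have hbint := hScont hb_cont
  set I := ∫ x in (0:ℝ)..xstar, p x with hIdef
  set Q := ∫ x in (0:ℝ)..xstar, q x with hQdef
  set A := ∫ x in (0:ℝ)..xstar, a x with hAdef
  set B := ∫ x in (0:ℝ)..xstar, b x with hBdef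
  -- main energy identity
  have hmain : lam.re * I + A - B = -(⟪v 0, matCLM Θ (v 0)⟫_ℂ).re := by
    set g : ℝ → ℂ := fun x => ⟪v x, Dm (v₂ x)⟫_ℂ + ⟪v₁ x, Dm (v₁ x)⟫_ℂ with hgdef
    have hg_cont : ContinuousOn g S :=
      (hv_cont.inner (Dm.continuous.comp_continuousOn hv2_cont)).add
        (hv1_cont.inner (Dm.continuous.comp_continuousOn hv1_cont))
    have hgint : IntervalIntegrable g volume 0 xstar := (huIcc ▸ hg_cont).intervalIntegrable
    have hGc : ContinuousOn (fun t => ⟪v t, Dm (v₁ t)⟫_ℂ) S :=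
      hv_cont.inner (Dm.continuous.comp_continuousOn hv1_cont)
    have hder : ∀ x ∈ Set.Ioo (0:ℝ) xstar,
        HasDerivAt (fun t => ⟪v t, Dm (v₁ t)⟫_ℂ) (g x) x := by
      intro x hx
      have hD1 : HasDerivAt (fun t => Dm (v₁ t)) (Dm (v₂ x)) x :=
        ((Dm.restrictScalars ℝ).hasFDerivAt).comp_hasDerivAt x (hdv1 x hx)
      exact (hdv x hx).inner ℂ hD1
    have hftc := intervalIntegral.integral_eq_sub_of_hasDerivAt_of_le hxstar.le hGc hder hgint
    rw [hDir] at hftc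
    rw [inner_zero_left, hRobin, zero_sub] at hftc
    have hre : (∫ x in (0:ℝ)..xstar, g x).re = ∫ x in (0:ℝ)..xstar, (g x).re := by
      have h12 := Complex.reCLM.intervalIntegral_comp_comm hgint
      simpa using h12.symm
    have hptw : ∀ x ∈ S, (g x).re = lam.re * p x - b x + a x := by
      intro x hx
      have hD2 : Dm (v₂ x) = lam • v x - matCLM (V x) (v x) := by
        rw [eq_sub_iff_add_eq]; exact heq x hx
      have h13 : ⟪v x, Dm (v₂ x)⟫_ℂ
          = lam * ((‖v x‖:ℂ))^2 - ⟪v x, matCLM (V x) (v x)⟫_ℂ := by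
        rw [hD2, inner_sub_right, inner_smul_right, inner_self_eq_norm_sq_to_K]
        norm_cast
      have h14 : (lam * ((‖v x‖:ℂ))^2).re = lam.re * p x := by
        have hc14 : ((‖v x‖:ℂ))^2 = ((‖v x‖^2 : ℝ) : ℂ) := by norm_cast
        rw [hc14, Complex.mul_re, Complex.ofReal_re, Complex.ofReal_im]
        simp [hpdef]
      simp only [hgdef, h13, Complex.add_re, Complex.sub_re, h14, hbdef, hadef]
    have hcongr : ∫ x in (0:ℝ)..xstar, (g x).re
        = ∫ x in (0:ℝ)..xstar, (lam.re * p x - b x + a x) := by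
      apply intervalIntegral.integral_congr
      intro x hx
      exact hptw x (huIcc ▸ hx)
    have hsplit : ∫ x in (0:ℝ)..xstar, (lam.re * p x - b x + a x)
        = lam.re * I - B + A := by
      rw [intervalIntegral.integral_add (((hpint.const_mul lam.re)).sub hbint) haint,
        intervalIntegral.integral_sub (hpint.const_mul lam.re) hbint,
        intervalIntegral.integral_const_mul]
    have hfinal : lam.re * I - B + A = (-⟪v 0, matCLM Θ (v 0)⟫_ℂ).re := by
      rw [← hsplit, ← hcongr, ← hre, hftc]
    rw [Complex.neg_re] at hfinal
    linarith
  -- lower bound on A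
  have hA : dmin * Q ≤ A := by
    rw [hAdef, hQdef, ← intervalIntegral.integral_const_mul]
    refine intervalIntegral.integral_mono_on hxstar.le (hqint.const_mul dmin) haint ?_
    intro x hx
    exact diag_lower d dmin hdmin_le (v₁ x)
  -- bound on the potential term
  have hKb : ∀ x ∈ S, ‖matCLM (V x)‖ ≤ K := by
    intro x hx
    have hxL' : x ∈ Set.Icc (0:ℝ) L := ⟨hx.1, hx.2.trans hxL⟩
    have hcont : ContinuousOn (fun y => ‖matCLM (V y)‖) (Set.Icc (0:ℝ) L) :=
      (continuous_norm.comp (matCLM_continuous n)).comp_continuousOn hV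
    have hbdd : BddAbove (Set.range fun y : Set.Icc (0:ℝ) L => ‖matCLM (V ↑y)‖) := by
      have hre : Set.range (fun y : Set.Icc (0:ℝ) L => ‖matCLM (V ↑y)‖)
          = (fun y => ‖matCLM (V y)‖) '' Set.Icc 0 L := by
        ext z
        simp only [Set.mem_range, Set.mem_image]
        constructor
        · rintro ⟨y, rfl⟩; exact ⟨y, y.2, rfl⟩
        · rintro ⟨y, hy, rfl⟩; exact ⟨⟨y, hy⟩, rfl⟩
      rw [hre]
      exact (isCompact_Icc.image_of_continuousOn hcont).bddAbove
    rw [hK]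
    exact le_ciSup hbdd ⟨x, hxL'⟩
  -- upper bound on B
  have hB : B ≤ K * I := by
    rw [hBdef, hIdef, ← intervalIntegral.integral_const_mul]
    refine intervalIntegral.integral_mono_on hxstar.le hbint (hpint.const_mul K) ?_
    intro x hx
    have h1 : b x ≤ ‖(⟪v x, matCLM (V x) (v x)⟫_ℂ)‖ := by
      exact Complex.re_le_norm _
    have h2 := norm_inner_le_norm (𝕜 := ℂ) (v x) (matCLM (V x) (v x))
    have h3 := (matCLM (V x)).le_opNorm (v x)
    have h5 : ‖matCLM (V x) (v x)‖ ≤ K * ‖v x‖ :=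
      h3.trans (mul_le_mul_of_nonneg_right (hKb x hx) (norm_nonneg _))
    calc b x ≤ ‖v x‖ * ‖matCLM (V x) (v x)‖ := h1.trans h2
      _ ≤ ‖v x‖ * (K * ‖v x‖) := mul_le_mul_of_nonneg_left h5 (norm_nonneg _)
      _ = K * p x := by simp only [hpdef]; ring
  -- boundary term
  have hTheta : -(⟪v 0, matCLM Θ (v 0)⟫_ℂ).re ≤ C * p 0 := by
    have h1 : -(⟪v 0, matCLM Θ (v 0)⟫_ℂ).re ≤ ‖(⟪v 0, matCLM Θ (v 0)⟫_ℂ)‖ := by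
      have := Complex.abs_re_le_norm (⟪v 0, matCLM Θ (v 0)⟫_ℂ)
      have h2 := neg_abs_le (⟪v 0, matCLM Θ (v 0)⟫_ℂ).re
      linarith [abs_le.mp this]
    have h2 := norm_inner_le_norm (𝕜 := ℂ) (v 0) (matCLM Θ (v 0))
    have h3 := (matCLM Θ).le_opNorm (v 0)
    have h5 : ‖matCLM Θ (v 0)‖ ≤ C * ‖v 0‖ := by
      rw [hC]; exact h3
    calc -(⟪v 0, matCLM Θ (v 0)⟫_ℂ).re ≤ ‖v 0‖ * ‖matCLM Θ (v 0)‖ := h1.trans h2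
      _ ≤ ‖v 0‖ * (C * ‖v 0‖) := mul_le_mul_of_nonneg_left h5 (norm_nonneg _)
      _ = C * p 0 := by simp only [hpdef]; ring
  -- the ε-inequality for the boundary value
  have hp0 : ∀ ε : ℝ, 0 < ε → p 0 ≤ ε⁻¹ * I + ε * Q := by
    intro ε hε
    set r : ℝ → ℝ := fun x => (⟪v x, v₁ x⟫_ℂ + ⟪v₁ x, v x⟫_ℂ).re with hrdef
    have hr_cont : ContinuousOn r S :=
      Complex.continuous_re.comp_continuousOn
        ((hv_cont.inner hv1_cont).add (hv1_cont.inner hv_cont))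
    have hrint := hScont hr_cont
    have hder : ∀ x ∈ Set.Ioo (0:ℝ) xstar,
        HasDerivAt (fun t => (⟪v t, v t⟫_ℂ).re) (r x) x := by
      intro x hx
      have h1 : HasDerivAt (fun t => ⟪v t, v t⟫_ℂ) (⟪v x, v₁ x⟫_ℂ + ⟪v₁ x, v x⟫_ℂ) x :=
        (hdv x hx).inner ℂ (hdv x hx)
      exact Complex.reCLM.hasFDerivAt.comp_hasDerivAt x h1
    have hcontG : ContinuousOn (fun t => (⟪v t, v t⟫_ℂ).re) S :=
      Complex.continuous_re.comp_continuousOn (hv_cont.inner hv_cont)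
    have hftc := intervalIntegral.integral_eq_sub_of_hasDerivAt_of_le hxstar.le hcontG hder hrint
    have hend : (⟪v xstar, v xstar⟫_ℂ).re = 0 := by rw [hDir]; simp
    have h0 : (⟪v 0, v 0⟫_ℂ).re = p 0 := by
      simp only [hpdef]; exact inner_self_eq_norm_sq (𝕜 := ℂ) (v 0)
    have hneg : p 0 = ∫ x in (0:ℝ)..xstar, (-r x) := by
      rw [intervalIntegral.integral_neg, hftc, hend, h0]; ring
    have hmono : ∫ x in (0:ℝ)..xstar, (-r x)
        ≤ ∫ x in (0:ℝ)..xstar, (ε⁻¹ * p x + ε * q x) := by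
      refine intervalIntegral.integral_mono_on hxstar.le hrint.neg
        ((hpint.const_mul ε⁻¹).add (hqint.const_mul ε)) ?_
      intro x hx
      have h2 : (⟪v₁ x, v x⟫_ℂ) = (starRingEnd ℂ) (⟪v x, v₁ x⟫_ℂ) := (inner_conj_symm _ _).symm
      have h3 : r x = 2 * (⟪v x, v₁ x⟫_ℂ).re := by
        simp only [hrdef, h2, Complex.add_re, Complex.conj_re]; ring
      have h4 : |(⟪v x, v₁ x⟫_ℂ).re| ≤ ‖(⟪v x, v₁ x⟫_ℂ)‖ := by
        exact Complex.abs_re_le_norm _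
      have h5 := norm_inner_le_norm (𝕜 := ℂ) (v x) (v₁ x)
      have h6 := neg_abs_le (⟪v x, v₁ x⟫_ℂ).re
      have hz : -r x ≤ 2 * (‖v x‖ * ‖v₁ x‖) := by
        rw [h3]; linarith
      have key : ε⁻¹ * (‖v x‖ - ε * ‖v₁ x‖)^2
          = ε⁻¹ * ‖v x‖^2 + ε * ‖v₁ x‖^2 - 2*(‖v x‖*‖v₁ x‖) := by
        field_simp; ring
      have knn : 0 ≤ ε⁻¹ * (‖v x‖ - ε * ‖v₁ x‖)^2 := by positivity
      simp only [hpdef, hqdef]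
      linarith
    have hsplit : ∫ x in (0:ℝ)..xstar, (ε⁻¹ * p x + ε * q x) = ε⁻¹ * I + ε * Q := by
      rw [intervalIntegral.integral_add ((hpint.const_mul ε⁻¹)) (hqint.const_mul ε),
        intervalIntegral.integral_const_mul, intervalIntegral.integral_const_mul]
    rw [hneg]
    rw [hsplit] at hmono
    exact hmono
  -- positivity of I
  have hI : 0 < I := by
    obtain ⟨x₀, hx₀S, hvx₀⟩ := hne
    have hx₀lt : x₀ < xstar := lt_of_le_of_ne hx₀S.2 (fun h => hvx₀ (h ▸ hDir))
    have hvpos : 0 < ‖v x₀‖ := norm_pos_iff.mpr hvx₀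
    have hpx₀ : 0 < p x₀ := by simp only [hpdef]; positivity
    have hcw : ContinuousWithinAt p S x₀ := hp_cont x₀ hx₀S
    obtain ⟨δ, hδ, hδp⟩ := Metric.continuousWithinAt_iff.mp hcw (p x₀ / 2) (by linarith)
    set c := min (x₀ + δ/2) xstar with hcdef
    have hc1 : x₀ < c := lt_min (by linarith) hx₀lt
    have hc2 : c ≤ xstar := min_le_right _ _
    have hc0 : 0 ≤ x₀ := hx₀S.1
    have hlow : ∀ x ∈ Set.Icc x₀ c, p x₀ / 2 ≤ p x := by
      intro x hx
      have hxS : x ∈ S := ⟨hc0.trans hx.1, hx.2.trans hc2⟩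
      have hxle : x ≤ x₀ + δ/2 := le_trans hx.2 (min_le_left _ _)
      have hdist : dist x x₀ < δ := by
        rw [Real.dist_eq, abs_of_nonneg (by linarith [hx.1])]
        linarith
      have h7 := hδp hxS hdist
      rw [Real.dist_eq] at h7
      have h8 := abs_lt.mp h7
      linarith [h8.1]
    have hsub1 : IntervalIntegrable p volume 0 x₀ :=
      hpint.mono_set (by rw [huIcc, Set.uIcc_of_le hc0]; exact Set.Icc_subset_Icc le_rfl (by linarith))
    have hsub2 : IntervalIntegrable p volume x₀ c :=
      hpint.mono_set (by rw [huIcc, Set.uIcc_of_le hc1.le]; exact Set.Icc_subset_Icc hc0 hc2)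
    have hsub3 : IntervalIntegrable p volume c xstar :=
      hpint.mono_set (by rw [huIcc, Set.uIcc_of_le hc2]; exact Set.Icc_subset_Icc (by linarith) le_rfl)
    have hmid : (c - x₀) * (p x₀ / 2) ≤ ∫ x in x₀..c, p x := by
      have h9 := intervalIntegral.integral_mono_on hc1.le intervalIntegrable_const hsub2 hlow
      have h9' : ((c - x₀) * p x₀) / 2 ≤ ∫ x in x₀..c, p x := by simpa using h9
      linarith
    have h10 : (0:ℝ) ≤ ∫ x in (0:ℝ)..x₀, p x :=
      intervalIntegral.integral_nonneg hc0 (fun x _ => by simp only [hpdef]; positivity)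
    have h11 : (0:ℝ) ≤ ∫ x in c..xstar, p x :=
      intervalIntegral.integral_nonneg hc2 (fun x _ => by simp only [hpdef]; positivity)
    have hsum : I = (∫ x in (0:ℝ)..x₀, p x) + ((∫ x in x₀..c, p x) + ∫ x in c..xstar, p x) := by
      rw [intervalIntegral.integral_add_adjacent_intervals hsub2 hsub3,
        intervalIntegral.integral_add_adjacent_intervals hsub1 (hsub2.trans hsub3)]
    have hmidpos : 0 < (c - x₀) * (p x₀ / 2) := by
      apply mul_pos; linarith; linarith
    rw [hsum]
    linarith
  -- combine
  have hQ0 : 0 ≤ Q := intervalIntegral.integral_nonneg hxstar.le (fun x _ => by positivity)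
  have hdQ : 0 ≤ dmin * Q := mul_nonneg hdminpos.le hQ0
  rcases eq_or_lt_of_le hC0 with hCz | hCpos
  · rw [← hCz] at hTheta
    simp only [zero_mul] at hTheta
    have h1 : lam.re * I ≤ K * I := by linarith
    have hlamK : lam.re ≤ K := le_of_mul_le_mul_right (by linarith) hI
    rw [← hCz]
    calc lam.re ≤ K := hlamK
      _ ≤ K + 0 ^ 2 / dmin := by simp
  · have hε : (0:ℝ) < dmin / C := div_pos hdminpos hCpos
    have h2 := hp0 (dmin / C) hε
    have hinv : (dmin / C)⁻¹ = C / dmin := by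
      rw [inv_div]
    have h3 : C * p 0 ≤ C ^ 2 / dmin * I + dmin * Q := by
      rw [hinv] at h2
      have := mul_le_mul_of_nonneg_left h2 hC0
      calc C * p 0 ≤ C * (C / dmin * I + dmin / C * Q) := this
        _ = C ^ 2 / dmin * I + dmin * Q := by field_simp
    have h4 : lam.re * I ≤ (K + C ^ 2 / dmin) * I := by rw [add_mul]; linarith
    exact le_of_mul_le_mul_right (by linarith) hI
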